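/- arXiv:1101.0577 — 6 statements merged into one kernel-verified Lean document; each statement's English description precedes it below -/
import Mathlib

section
/- With the definitions of a_p^n, x_p, t_p, u_p, α_p as above, for all integers d ≥ a_p^n + 1 one has α_{p+1}(d-1,n) ≤ α_p(d,n). -/
def aP (n p : ℤ) : ℤ := (n - p).fdiv 2 + 1
def xP (p n d : ℤ) : ℤ := (d - aP n p).fdiv (n + p - 1)
def tP (p n d : ℤ) : ℤ := d - 1 - xP p n d * (n + p - 1)
def uP (p n d : ℤ) : ℤ := (p - n + 1 + tP p n d).fdiv 2
def alphaP (p n d : ℤ) : ℤ :=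
  xP p n d * (xP p n d - 1) * (n + p - 1) / 2 + xP p n d * (tP p n d + p) + uP p n d

set_option maxHeartbeats 1000000 in
lemma finLem (M k v r e f f' : ℤ) (hM : 3 ≤ M) (hk : 0 ≤ k) (hv : 0 ≤ v)
    (hr : 0 ≤ r) (he0 : 0 ≤ e) (he1 : e < 2) (hf0 : 0 ≤ f) (hf1 : f < 2)
    (hf0' : 0 ≤ f') (hf1' : f' < 2) :
    -1 ≤ k*(k-1)*M + v^2 - k^2 + 2*(v+k) + 2*k*r - k*e + f' - f := by
  rcases eq_or_lt_of_le hk with h0 | h1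
  · subst h0; nlinarith [sq_nonneg v]
  · rcases eq_or_lt_of_le (by linarith : (1:ℤ) ≤ k) with h2 | h3
    · subst h2; nlinarith [sq_nonneg v]
    · have hk2 : 2 ≤ k := by linarith
      nlinarith [sq_nonneg v,
        mul_nonneg (mul_nonneg hk (by linarith : (0:ℤ) ≤ k - 1)) (by linarith : (0:ℤ) ≤ M-3),
        mul_nonneg hk hr,
        mul_nonneg hk (by linarith : (0:ℤ) ≤ 1 - e),
        mul_nonneg (by linarith : (0:ℤ) ≤ k - 2) hk]

set_option maxHeartbeats 1000000 in
lemma keyLem (n p d s e q r q' r' u f u' f' w w' : ℤ)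
    (hn : 3 ≤ n) (hp : 0 ≤ p)
    (hE2 : n - p = 2*s + e) (he0 : 0 ≤ e) (he1 : e < 2)
    (hd : s + 2 ≤ d)
    (hE1 : d - (s+1) = (n+p-1)*q + r) (hr0 : 0 ≤ r) (hr1 : r < n+p-1)
    (hE4 : d - 1 - (s+e) = (n+p)*q' + r') (hr0' : 0 ≤ r') (hr1' : r' < n+p)
    (hE5 : p - n + 1 + (d-1-q*(n+p-1)) = 2*u + f) (hf0 : 0 ≤ f) (hf1 : f < 2)
    (hE6 : p + 2 - n + (d-2-q'*(n+p)) = 2*u' + f') (hf0' : 0 ≤ f') (hf1' : f' < 2)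
    (hE7 : q*(q-1) = 2*w) (hE8 : q'*(q'-1) = 2*w') :
    w'*(n+p) + q'*((d-2-q'*(n+p))+p+1) + u' ≤ w*(n+p-1) + q*((d-1-q*(n+p-1))+p) + u := by
  have hq0 : 0 ≤ q := by
    by_contra hc
    push_neg at hc
    have h1 : 0 ≤ (-(q+1)) * (n+p-1) := mul_nonneg (by linarith) (by linarith)
    nlinarith
  have hq0' : 0 ≤ q' := by
    by_contra hc
    push_neg at hc
    have h1 : 0 ≤ (-(q'+1)) * (n+p) := mul_nonneg (by linarith) (by linarith)
    nlinarith
  have hqq : q' ≤ q := by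
    by_contra hc
    push_neg at hc
    have h1 : 0 ≤ (q' - q - 1) * (n+p) := mul_nonneg (by linarith) (by linarith)
    nlinarith
  have hid : 2*((w*(n+p-1) + q*((d-1-q*(n+p-1))+p) + u) -
      (w'*(n+p) + q'*((d-2-q'*(n+p))+p+1) + u')) =
      (q-q')*((q-q')-1)*(n+p) + q'^2 - (q-q')^2 + 2*q + 2*(q-q')*r - (q-q')*e + f' - f := by
    linear_combination (-(n+p-1))*hE7 + (n+p)*hE8 - hE5 + hE6 + (q-q')*(2*hE1 - hE2)
  have hk0 : 0 ≤ q - q' := by linarith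
  have hfin : -1 ≤ (q-q')*((q-q')-1)*(n+p) + q'^2 - (q-q')^2 + 2*q + 2*(q-q')*r
      - (q-q')*e + f' - f := by
    have h := finLem (n+p) (q-q') q' r e f f' (by linarith) hk0 hq0' hr0 he0 he1 hf0 hf1 hf0' hf1'
    linarith
  by_contra hc
  push_neg at hc
  have h1 := Int.add_one_le_iff.mpr hc
  linarith

theorem stmt1 (n p d : ℤ) (hn : 3 ≤ n) (hp : 0 ≤ p) (hd : aP n p + 1 ≤ d) :
    alphaP (p + 1) n (d - 1) ≤ alphaP p n d := by
  have h2 : (0:ℤ) < 2 := two_pos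
  have hm : (0:ℤ) < n + p - 1 := by linarith
  have hm1 : (0:ℤ) < n + (p+1) - 1 := by linarith
  simp only [alphaP, xP, tP, uP, aP] at hd ⊢
  set s := (n-p).fdiv 2 with hs
  set e := (n-p).fmod 2 with he
  have hE2 : n - p = 2*s + e := by
    have := Int.mul_fdiv_add_fmod (n-p) 2; linarith
  have he0 : 0 ≤ e := Int.fmod_nonneg_of_pos _ h2
  have he1 : e < 2 := Int.fmod_lt_of_pos _ h2
  set s' := (n-(p+1)).fdiv 2 with hs'
  set e' := (n-(p+1)).fmod 2 with he'
  have hE3 : n - (p+1) = 2*s' + e' := by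
    have := Int.mul_fdiv_add_fmod (n-(p+1)) 2; linarith
  have he0' : 0 ≤ e' := Int.fmod_nonneg_of_pos _ h2
  have he1' : e' < 2 := Int.fmod_lt_of_pos _ h2
  have hd2 : s + 2 ≤ d := by linarith
  set q := (d - (s+1)).fdiv (n+p-1) with hq
  set r := (d - (s+1)).fmod (n+p-1) with hr
  have hE1 : d - (s+1) = (n+p-1)*q + r := by
    rw [hq, hr]; exact (Int.mul_fdiv_add_fmod _ _).symm
  have hr0 : 0 ≤ r := Int.fmod_nonneg_of_pos _ hm
  have hr1 : r < n+p-1 := Int.fmod_lt_of_pos _ hm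
  set q' := (d - 1 - (s'+1)).fdiv (n+(p+1)-1) with hq'
  set r' := (d - 1 - (s'+1)).fmod (n+(p+1)-1) with hr'
  have hE4a : d - 1 - (s'+1) = (n+(p+1)-1)*q' + r' := by
    rw [hq', hr']; exact (Int.mul_fdiv_add_fmod _ _).symm
  have hr0' : 0 ≤ r' := Int.fmod_nonneg_of_pos _ hm1
  have hr1' : r' < n+p := by
    have := Int.fmod_lt_of_pos (d - 1 - (s'+1)) hm1
    linarith
  have hs'e : s' + 1 = s + e := by omega
  have hE4 : d - 1 - (s+e) = (n+p)*q' + r' := by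
    have h : (n+(p+1)-1)*q' = (n+p)*q' := by ring
    rw [← hs'e]
    linarith [hE4a, h]
  set u := (p - n + 1 + (d - 1 - q * (n + p - 1))).fdiv 2 with hu
  set f := (p - n + 1 + (d - 1 - q * (n + p - 1))).fmod 2 with hf
  have hE5 : p - n + 1 + (d-1-q*(n+p-1)) = 2*u + f := by
    rw [hu, hf]; exact (Int.mul_fdiv_add_fmod _ _).symm
  have hf0 : 0 ≤ f := Int.fmod_nonneg_of_pos _ h2
  have hf1 : f < 2 := Int.fmod_lt_of_pos _ h2
  set u' := (p + 1 - n + 1 + (d - 1 - 1 - q' * (n + (p + 1) - 1))).fdiv 2 with hu'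
  set f' := (p + 1 - n + 1 + (d - 1 - 1 - q' * (n + (p + 1) - 1))).fmod 2 with hf'
  have hE6 : p + 2 - n + (d-2-q'*(n+p)) = 2*u' + f' := by
    have h := Int.mul_fdiv_add_fmod (p + 1 - n + 1 + (d - 1 - 1 - q' * (n + (p + 1) - 1))) 2
    rw [← hu', ← hf'] at h
    have hq'' : q' * (n + (p + 1) - 1) = q' * (n+p) := by ring
    linarith [h, hq'']
  have hf0' : 0 ≤ f' := Int.fmod_nonneg_of_pos _ h2
  have hf1' : f' < 2 := Int.fmod_lt_of_pos _ h2
  obtain ⟨w, hw⟩ : ∃ w, q*(q-1) = 2*w := (Int.even_mul_pred_self q).two_dvd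
  obtain ⟨w', hw'⟩ : ∃ w', q'*(q'-1) = 2*w' := (Int.even_mul_pred_self q').two_dvd
  have hdiv1 : q * (q - 1) * (n + p - 1) / 2 = w * (n+p-1) := by
    rw [hw, mul_assoc, Int.mul_ediv_cancel_left _ (by norm_num : (2:ℤ) ≠ 0)]
  have hdiv2 : q' * (q' - 1) * (n + (p+1) - 1) / 2 = w' * (n+p) := by
    rw [hw', mul_assoc, Int.mul_ediv_cancel_left _ (by norm_num : (2:ℤ) ≠ 0)]
    ring
  rw [hdiv1, hdiv2]
  have hkey := keyLem n p d s e q r q' r' u f u' f' w w' hn hp hE2 he0 he1 hd2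
    hE1 hr0 hr1 hE4 hr0' hr1' hE5 hf0 hf1 hE6 hf0' hf1' hw hw'
  nlinarith [hkey]
end

section
/- With the definitions of a_p^n, x_p, t_p, u_p, α_p as above, for all integers d ≥ a_p^n + n + p one has α_{p+1}(d,n) ≤ α_p(d,n). -/
lemma even_pred (x : ℤ) : ∃ k, x * (x - 1) = 2 * k := by
  obtain ⟨r, hr⟩ := Int.even_mul_succ_self (x - 1)
  exact ⟨r, by linear_combination hr⟩

lemma fdiv2 (a : ℤ) : a.fdiv 2 = a / 2 := Int.fdiv_eq_ediv_of_nonneg a (by norm_num)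

lemma ediv_eq_of (y m q : ℤ) (hm : 0 < m) (h1 : q * m ≤ y) (h2 : y < (q + 1) * m) :
    y / m = q := by
  have ha : q ≤ y / m := (Int.le_ediv_iff_mul_le hm).mpr h1
  have hb : y / m < q + 1 := (Int.ediv_lt_iff_lt_mul hm).mpr h2
  omega

lemma xP_eq (p n d q : ℤ) (hm : 0 < n + p - 1) (h1 : q * (n + p - 1) ≤ d - aP n p)
    (h2 : d - aP n p < (q + 1) * (n + p - 1)) : xP p n d = q := by
  unfold xP
  rw [Int.fdiv_eq_ediv_of_nonneg _ hm.le]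
  exact ediv_eq_of _ _ _ hm h1 h2

lemma alpha_eq (p n d x k : ℤ) (hx : xP p n d = x) (hk : x * (x - 1) = 2 * k) :
    alphaP p n d = k * (n + p - 1) + x * (d - 1 - x * (n + p - 1) + p)
      + (p - n + 1 + (d - 1 - x * (n + p - 1))) / 2 := by
  simp only [alphaP, tP, uP, hx, fdiv2]
  rw [show x * (x - 1) * (n + p - 1) = 2 * (k * (n + p - 1)) by rw [hk]; ring,
    Int.mul_ediv_cancel_left _ two_ne_zero]

lemma alphaA (p n d m : ℤ) (hm : 0 < m) (hmdef : m = n + p - 1) :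
    alphaP p n (d + m) = alphaP p n d + (d - 1 + p) := by
  subst hmdef
  obtain ⟨k, hk⟩ := even_pred (xP p n d)
  have hx1 : xP p n (d + (n + p - 1)) = xP p n d + 1 := by
    unfold xP
    rw [show d + (n + p - 1) - aP n p = (d - aP n p) + 1 * (n + p - 1) by ring,
      Int.fdiv_eq_ediv_of_nonneg _ hm.le, Int.fdiv_eq_ediv_of_nonneg _ hm.le,
      Int.add_mul_ediv_right _ _ (ne_of_gt hm)]
  have hk2 : (xP p n d + 1) * (xP p n d + 1 - 1) = 2 * (k + xP p n d) := by
    linear_combination hk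
  rw [alpha_eq p n d (xP p n d) k rfl hk, alpha_eq p n (d + (n + p - 1)) (xP p n d + 1)
    (k + xP p n d) hx1 hk2,
    show d + (n + p - 1) - 1 - (xP p n d + 1) * (n + p - 1) = d - 1 - xP p n d * (n + p - 1)
      by ring]
  ring

lemma alphaMono (n p d : ℤ) (hn : 3 ≤ n) (hp : 0 ≤ p) (hd : aP n p ≤ d) :
    alphaP p n d ≤ alphaP p n (d + 1) := by
  have hm : 0 < n + p - 1 := by omega
  have hxe : xP p n d = (d - aP n p) / (n + p - 1) := by
    unfold xP; exact Int.fdiv_eq_ediv_of_nonneg _ hm.le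
  have hdiv := Int.mul_ediv_add_emod (d - aP n p) (n + p - 1)
  have hr0 : 0 ≤ (d - aP n p) % (n + p - 1) := Int.emod_nonneg _ (ne_of_gt hm)
  have hrm : (d - aP n p) % (n + p - 1) < n + p - 1 := Int.emod_lt_of_pos _ hm
  have hx0 : 0 ≤ xP p n d := by
    rw [hxe]; exact Int.ediv_nonneg (by omega) hm.le
  have hyx : d - aP n p = (n + p - 1) * xP p n d + (d - aP n p) % (n + p - 1) := by
    rw [hxe]; linarith [hdiv]
  obtain ⟨k, hk⟩ := even_pred (xP p n d)
  have hA : aP n p = (n - p) / 2 + 1 := by unfold aP; rw [fdiv2]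
  set x := xP p n d with hxdef
  by_cases hcase : (d - aP n p) % (n + p - 1) = n + p - 1 - 1
  · -- x jumps to x + 1
    have hx1 : xP p n (d + 1) = x + 1 := by
      unfold xP
      rw [show d + 1 - aP n p = 0 + (x + 1) * (n + p - 1) by
        linear_combination hyx + hcase, Int.fdiv_eq_ediv_of_nonneg _ hm.le,
        Int.add_mul_ediv_right _ _ (ne_of_gt hm)]
      simp
    have hk2 : (x + 1) * (x + 1 - 1) = 2 * (k + x) := by linear_combination hk
    rw [alpha_eq p n d x k rfl hk, alpha_eq p n (d + 1) (x + 1) (k + x) hx1 hk2]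
    have e1 : d + 1 - 1 - (x + 1) * (n + p - 1) = aP n p - 1 := by
      linear_combination hyx + hcase
    have e2 : d - 1 - x * (n + p - 1) = aP n p + (n + p - 1) - 2 := by
      linear_combination hyx + hcase
    rw [e1, e2]
    have hfin : 0 ≤ aP n p - 1 + p + x
        + ((p - n + 1 + (aP n p - 1)) / 2 - (p - n + 1 + (aP n p + (n + p - 1) - 2)) / 2) := by
      omega
    have hring : (k + x) * (n + p - 1) + (x + 1) * (aP n p - 1 + p)
        = k * (n + p - 1) + x * (aP n p + (n + p - 1) - 2 + p) + (aP n p - 1 + p + x) := by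
      ring
    linarith [hfin, hring]
  · -- x stays
    have hx1 : xP p n (d + 1) = x := by
      unfold xP
      rw [show d + 1 - aP n p = ((d - aP n p) % (n + p - 1) + 1) + x * (n + p - 1) by
        linear_combination hyx, Int.fdiv_eq_ediv_of_nonneg _ hm.le,
        Int.add_mul_ediv_right _ _ (ne_of_gt hm),
        Int.ediv_eq_zero_of_lt (by omega) (by omega)]
      simp
    rw [alpha_eq p n d x k rfl hk, alpha_eq p n (d + 1) x k hx1 hk]
    have hdiv2 : (p - n + 1 + (d - 1 - x * (n + p - 1))) / 2
        ≤ (p - n + 1 + (d + 1 - 1 - x * (n + p - 1))) / 2 :=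
      Int.ediv_le_ediv (by norm_num) (by linarith)
    have hprod : x * (d + 1 - 1 - x * (n + p - 1) + p)
        = x * (d - 1 - x * (n + p - 1) + p) + x := by ring
    linarith [hx0, hdiv2, hprod]

lemma baseCase (n p d : ℤ) (hn : 3 ≤ n) (hp : 0 ≤ p) (hd1 : aP n p + n + p ≤ d)
    (hd2 : d ≤ aP n p + n + p + (n + p - 1)) : alphaP (p + 1) n d ≤ alphaP p n d := by
  have hA : aP n p = (n - p) / 2 + 1 := by unfold aP; rw [fdiv2]
  have hA' : aP n (p + 1) = (n - (p + 1)) / 2 + 1 := by unfold aP; rw [fdiv2]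
  have hm : 0 < n + p - 1 := by omega
  have hm' : 0 < n + (p + 1) - 1 := by omega
  have hx : (xP p n d = 1 ∧ d - aP n p < 2 * (n + p - 1)) ∨
      (xP p n d = 2 ∧ 2 * (n + p - 1) ≤ d - aP n p) := by
    by_cases hc : d - aP n p < 2 * (n + p - 1)
    · exact Or.inl ⟨xP_eq p n d 1 hm (by omega) (by omega), hc⟩
    · exact Or.inr ⟨xP_eq p n d 2 hm (by omega) (by omega), by omega⟩
  have hx' : (xP (p + 1) n d = 1 ∧ d - aP n (p + 1) < 2 * (n + (p + 1) - 1)) ∨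
      (xP (p + 1) n d = 2 ∧ 2 * (n + (p + 1) - 1) ≤ d - aP n (p + 1)) := by
    by_cases hc : d - aP n (p + 1) < 2 * (n + (p + 1) - 1)
    · exact Or.inl ⟨xP_eq (p + 1) n d 1 hm' (by omega) (by omega), hc⟩
    · exact Or.inr ⟨xP_eq (p + 1) n d 2 hm' (by omega) (by omega), by omega⟩
  rcases hx with ⟨hx, hr⟩ | ⟨hx, hr⟩ <;> rcases hx' with ⟨hx', hr'⟩ | ⟨hx', hr'⟩ <;>
    simp only [alphaP, tP, uP, hx, hx', fdiv2] <;>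
    omega

theorem stmt2 (n p d : ℤ) (hn : 3 ≤ n) (hp : 0 ≤ p) (hd : aP n p + n + p ≤ d) :
    alphaP (p + 1) n d ≤ alphaP p n d := by
  have hm : 0 < n + p - 1 := by omega
  obtain ⟨k, hk⟩ : ∃ k : ℕ, d = aP n p + n + p + (k : ℤ) :=
    ⟨(d - (aP n p + n + p)).toNat, by omega⟩
  clear hd
  induction k using Nat.strong_induction_on generalizing d with
  | _ k IH =>
    by_cases hsmall : (k : ℤ) ≤ n + p - 1
    · exact baseCase n p d hn hp (by omega) (by omega)
    · have hk' : ((k - (n + p).toNat : ℕ) : ℤ) = (k : ℤ) - (n + p) := by omega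
      have hlt : k - (n + p).toNat < k := by omega
      have h3 : alphaP (p + 1) n (d - (n + p)) ≤ alphaP p n (d - (n + p)) :=
        IH _ hlt _ (by omega)
      have h1 : alphaP (p + 1) n d = alphaP (p + 1) n (d - (n + p)) + (d - (n + p) - 1 + (p + 1)) := by
        have := alphaA (p + 1) n (d - (n + p)) (n + p) (by omega) (by ring)
        rw [show d - (n + p) + (n + p) = d by ring] at this
        exact this
      have h2 : alphaP p n d = alphaP p n (d - (n + p) + 1) + (d - (n + p) + 1 - 1 + p) := by
        have := alphaA p n (d - (n + p) + 1) (n + p - 1) hm rfl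
        rw [show d - (n + p) + 1 + (n + p - 1) = d by ring] at this
        exact this
      have h4 : alphaP p n (d - (n + p)) ≤ alphaP p n (d - (n + p) + 1) :=
        alphaMono n p _ hn hp (by omega)
      linarith
end

section
/- With the definitions of α_p as above, for all integers d, n ≥ 3, p ≥ 0, the value α_p(d+1,n+1) equals either α_{p+1}(d,n) - 1 or α_{p+1}(d,n). -/
theorem stmt4 (n p d : ℤ) (hn : 3 ≤ n) (hp : 0 ≤ p) :
    alphaP p (n + 1) (d + 1) = alphaP (p + 1) n d - 1 ∨
    alphaP p (n + 1) (d + 1) = alphaP (p + 1) n d := by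
  have h1 : aP (n+1) p = aP n (p+1) + 1 := by
    unfold aP
    rw [Int.fdiv_eq_ediv_of_nonneg _ (by norm_num), Int.fdiv_eq_ediv_of_nonneg _ (by norm_num)]
    omega
  have hx : xP p (n+1) (d+1) = xP (p+1) n d := by
    unfold xP
    rw [h1]
    congr 1 <;> ring
  have ht : tP p (n+1) (d+1) = tP (p+1) n d + 1 := by
    unfold tP
    rw [hx]; ring
  have hu : uP p (n+1) (d+1) = uP (p+1) n d - 1 ∨
      uP p (n+1) (d+1) = uP (p+1) n d := by
    unfold uP
    rw [ht, Int.fdiv_eq_ediv_of_nonneg _ (by norm_num), Int.fdiv_eq_ediv_of_nonneg _ (by norm_num)]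
    omega
  have h2 : n + 1 + p - 1 = n + (p+1) - 1 := by ring
  rcases hu with hu | hu
  · left
    unfold alphaP
    rw [hx, ht, hu, h2]
    ring
  · right
    unfold alphaP
    rw [hx, ht, hu, h2]
    ring
end

section
/- With α_p, x_p, and F_d^{p,n} defined as above, for all integers n ≥ 3, p ≥ 0 and d ≥ a_p^n: α_p(d,n) = ⌊F_d^{p,n}(2(x_p(d,n)+1)) - 1/2⌋. -/
def F (p n d r : ℤ) : ℚ :=
  (1/2 : ℚ) * ((d : ℚ) * (r - 1) + ((p : ℚ) - 1) * r - (((n : ℚ) + p - 1)/4) * r^2) + 1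

theorem stmt7 (n p d : ℤ) (hn : 3 ≤ n) (hp : 0 ≤ p) (hd : aP n p ≤ d) :
    alphaP p n d = ⌊F p n d (2 * (xP p n d + 1)) - 1/2⌋ := by
  set x := xP p n d with hx
  set t := tP p n d with ht
  set k := n + p - 1 with hk
  -- even part
  obtain ⟨c, hc⟩ : ∃ c, x * (x - 1) * k = 2 * c := by
    rcases Int.even_mul_succ_self (x - 1) with ⟨c, hc⟩
    exact ⟨c * k, by rw [show x * (x - 1) * k = ((x-1) * (x-1+1)) * k by ring, hc]; ring⟩
  have hM : F p n d (2 * (x + 1)) - 1/2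
      = ((d * (2*x+1) + 2*(p-1)*(x+1) - k*(x+1)^2 + 1 : ℤ) : ℚ) / ((2:ℕ) : ℚ) := by
    rw [hk]
    unfold F
    push_cast
    ring
  rw [hM, Rat.floor_intCast_div_natCast]
  have hd' : d = t + 1 + x * k := by rw [ht]; unfold tP; rw [← hx, ← hk]; ring
  have hN : d * (2*x+1) + 2*(p-1)*(x+1) - k*(x+1)^2 + 1
      = 2*c + 2*(x*t) + 2*(p*x) + (t + 2*p - k) := by
    rw [hd', ← hc]; ring
  have hu : uP p n d = (t + 2*p - k).fdiv 2 := by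
    unfold uP; rw [← ht, hk]; ring_nf
  have hu2 : uP p n d = (t + 2*p - k) / 2 := by
    rw [hu, Int.fdiv_eq_ediv_of_nonneg _ (by norm_num)]
  have halpha : alphaP p n d = c + (x*t + p*x) + uP p n d := by
    unfold alphaP
    rw [← hx, ← ht, ← hk, hc, Int.mul_ediv_cancel_left _ (by norm_num)]
    ring
  rw [halpha, hN, hu2]
  generalize x*t = A at *
  generalize p*x = B at *
  generalize t + 2*p - k = w at *
  omega
end

section
/- With α_p, x_p, and F_d^{p,n} defined as above, for all integers n ≥ 3, p ≥ 0 and d ≥ a_{p+1}^n + 1: α_{p+1}(d-1,n) = ⌊F_d^{p,n+1}(2(x_{p+1}(d-1,n)+1))⌋. -/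
theorem stmt8 (n p d : ℤ) (hn : 3 ≤ n) (hp : 0 ≤ p) (hd : aP n (p + 1) + 1 ≤ d) :
    alphaP (p + 1) n (d - 1) = ⌊F p (n + 1) d (2 * (xP (p + 1) n (d - 1) + 1))⌋ := by
  set x := xP (p + 1) n (d - 1) with hx
  set t := tP (p + 1) n (d - 1) with ht
  have ht' : d = t + 2 + x * (n + p) := by
    rw [ht]; unfold tP; rw [← hx]; ring
  obtain ⟨k, hk0⟩ : Even (x * (x - 1)) := by
    rcases Int.even_or_odd x with h | h
    · exact h.mul_right _
    · exact (h.sub_odd odd_one).mul_left _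
  have hk : x * (x - 1) = 2 * k := by omega
  set A : ℤ := t + p - n + 2 * (x * t + x + p * x + k * (n + p)) with hA
  -- rewrite the floor side
  have hF : F p (n + 1) d (2 * (x + 1)) = (A : ℚ) / ((2 : ℕ) : ℚ) + 1 := by
    unfold F
    have hdq : (d : ℚ) = (t : ℚ) + 2 + (x : ℚ) * ((n : ℚ) + (p : ℚ)) := by
      exact_mod_cast congrArg (Int.cast : ℤ → ℚ) ht'
    have hkq : (x : ℚ) * ((x : ℚ) - 1) = 2 * (k : ℚ) := by
      exact_mod_cast congrArg (Int.cast : ℤ → ℚ) hk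
    rw [hA, hdq]
    push_cast
    linear_combination (((n : ℚ) + (p : ℚ)) / 2) * hkq
  rw [hF, Int.floor_add_one, Rat.floor_intCast_div_natCast]
  -- compute the integer division of A by 2
  have hA2 : A / ((2 : ℕ) : ℤ) = (t + p - n) / 2 + (x * t + x + p * x + k * (n + p)) := by
    rw [hA]
    push_cast
    exact Int.add_mul_ediv_left _ _ (by norm_num)
  rw [hA2]
  -- now the left side
  unfold alphaP uP
  rw [← hx, ← ht]
  have hdiv2 : x * (x - 1) * (n + (p + 1) - 1) / 2 = k * (n + p) := by
    have h1 : x * (x - 1) * (n + (p + 1) - 1) = 2 * (k * (n + p)) := by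
      rw [hk]; ring
    rw [h1, Int.mul_ediv_cancel_left _ (by norm_num)]
  rw [hdiv2]
  have hu : (p + 1 - n + 1 + t).fdiv 2 = (t + p - n) / 2 + 1 := by
    rw [Int.fdiv_eq_ediv_of_nonneg _ (by norm_num)]
    have : p + 1 - n + 1 + t = t + p - n + 2 * 1 := by ring
    rw [this, Int.add_mul_ediv_left _ _ (by norm_num : (2:ℤ) ≠ 0)]
  rw [hu]
  ring
end

section
/- If x_p(d-1,n) = 0 (with definitions as above), then ⌊(d-n+p)/2⌋ ≤ α_p(d,n) ≤ ⌊(d-n+p+1)/2⌋. -/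
theorem stmt10 (n p d : ℤ) (hn : 3 ≤ n) (hp : 0 ≤ p) (hd : aP n p + 1 ≤ d)
    (hx : xP p n (d - 1) = 0) :
    (d - n + p).fdiv 2 ≤ alphaP p n d ∧ alphaP p n d ≤ (d - n + p + 1).fdiv 2 := by
  have hm : (0:ℤ) < n + p - 1 := by omega
  have hA : aP n p = (n - p) / 2 + 1 := by
    unfold aP; rw [Int.fdiv_eq_ediv_of_nonneg _ (by norm_num)]
  have hx0 : (d - 1 - aP n p) / (n + p - 1) = 0 := by
    unfold xP at hx
    rw [Int.fdiv_eq_ediv_of_nonneg _ (le_of_lt hm)] at hx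
    exact hx
  have hlt : d - 1 - aP n p < n + p - 1 := by
    have h1 := Int.mul_ediv_add_emod (d - 1 - aP n p) (n + p - 1)
    have h2 := Int.emod_lt_of_pos (d - 1 - aP n p) hm
    rw [hx0] at h1
    omega
  rcases lt_or_eq_of_le (show d - aP n p ≤ n + p - 1 by omega) with h | h
  · have hxd : xP p n d = 0 := by
      unfold xP
      rw [Int.fdiv_eq_ediv_of_nonneg _ (le_of_lt hm)]
      exact Int.ediv_eq_zero_of_lt (by omega) h
    unfold alphaP tP uP tP
    rw [hxd]
    rw [Int.fdiv_eq_ediv_of_nonneg _ (by norm_num), Int.fdiv_eq_ediv_of_nonneg _ (by norm_num),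
      Int.fdiv_eq_ediv_of_nonneg _ (by norm_num)]
    simp only [zero_mul, mul_zero]
    constructor <;> [skip; skip] <;> omega
  · have hxd : xP p n d = 1 := by
      unfold xP
      rw [Int.fdiv_eq_ediv_of_nonneg _ (le_of_lt hm), h]
      exact Int.ediv_self (by omega)
    unfold alphaP tP uP tP
    rw [hxd]
    rw [Int.fdiv_eq_ediv_of_nonneg _ (by norm_num), Int.fdiv_eq_ediv_of_nonneg _ (by norm_num),
      Int.fdiv_eq_ediv_of_nonneg _ (by norm_num)]
    simp only [one_mul, sub_self, zero_mul, mul_one]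
    constructor <;> omega
end
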